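/- In the one-variable Sl(2)-orbit setting, assume additionally that Λ is discrete (for every R > 0 the set {v ∈ Λ : ‖v‖ ≤ R} is finite). Then for every L ∈ ℝ, the set {v ∈ Λ : ∃ y ≥ 1 such that v is self-dual at y and satisfies the tadpole bound L at y} is finite. (The one-variable Sl(2)-orbit case of Theorem 4: finiteness of self-dual flux vacua; paper §6.1.) -/

import Mathlib

/-- One-variable Sl(2)-orbit case of the finiteness of self-dual flux vacua: if the flux
lattice `Λ` is discrete, then for every tadpole bound `L` only finitely many fluxes
`v ∈ Λ` are self-dual and satisfy the tadpole bound at some saxion value `y ≥ 1`. -/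
theorem finiteness_selfdual_one_variable_sl2
    (V : Type*) [NormedAddCommGroup V] [InnerProductSpace ℝ V] [FiniteDimensional ℝ V]
    -- the orthogonal weight decomposition V = ⊕_ℓ V_ℓ, via its projections P ℓ
    (P : ℤ → (V →ₗ[ℝ] V))
    (hPfin : (Function.support P).Finite)
    (hPsum : ∀ v : V, ∑ᶠ ℓ : ℤ, P ℓ v = v)
    (hPproj : ∀ (ℓ : ℤ) (v : V), P ℓ (P ℓ v) = P ℓ v)
    (hPorth : ∀ ℓ ℓ' : ℤ, ℓ ≠ ℓ' → ∀ u w : V, (inner ℝ (P ℓ u) (P ℓ' w) : ℝ) = 0)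
    -- the boundary Weil operator C, a linear isometry with C(V_ℓ) = V_{-ℓ}
    (C : V →ₗ[ℝ] V)
    (hCiso : ∀ v : V, ‖C v‖ = ‖v‖)
    (hCw : ∀ ℓ : ℤ, Submodule.map C (LinearMap.range (P ℓ)) = LinearMap.range (P (-ℓ)))
    -- the flux lattice Λ and the integrality gap λ
    (Λ : AddSubgroup V)
    (lam : ℝ) (hlam : 0 < lam)
    (hgap : ∀ v ∈ Λ, ∀ ℓ : ℤ, P ℓ v = 0 ∨ lam ≤ ‖P ℓ v‖)
    -- discreteness of the lattice
    (hdiscrete : ∀ R : ℝ, 0 < R → {v : V | v ∈ Λ ∧ ‖v‖ ≤ R}.Finite)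
    (L : ℝ) :
    {v : V | v ∈ Λ ∧ ∃ y : ℝ, 1 ≤ y ∧
      (∀ ℓ : ℤ, y ^ ℓ • P ℓ v = C (P (-ℓ) v)) ∧
      (∑ᶠ ℓ : ℤ, y ^ ℓ * ‖P ℓ v‖ ^ 2 ≤ L)}.Finite := by
  classical
  -- uniform bound on the square norm of each weight component
  set B : ℝ := max 0 (max L (L * L / (lam * lam))) with hB
  have hB0 : 0 ≤ B := le_max_left _ _
  have hLB : L ≤ B := le_trans (le_max_left _ _) (le_max_right _ _)
  have hLLB : L * L / (lam * lam) ≤ B := le_trans (le_max_right _ _) (le_max_right _ _)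
  set R : ℝ := (hPfin.toFinset.card : ℝ) * Real.sqrt B + 1 with hR
  have hRpos : 0 < R := by
    have : 0 ≤ (hPfin.toFinset.card : ℝ) * Real.sqrt B :=
      mul_nonneg (Nat.cast_nonneg _) (Real.sqrt_nonneg _)
    linarith
  refine (hdiscrete R hRpos).subset ?_
  rintro v ⟨hvΛ, y, hy1, hSD, hT⟩
  have hy0 : (0 : ℝ) < y := lt_of_lt_of_le one_pos hy1
  -- each tadpole term is bounded by L
  set g : ℤ → ℝ := fun ℓ => y ^ ℓ * ‖P ℓ v‖ ^ 2 with hg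
  have hgnn : ∀ ℓ, 0 ≤ g ℓ := fun ℓ =>
    mul_nonneg (zpow_pos hy0 ℓ).le (sq_nonneg _)
  have hgfin : (Function.support g).Finite := hPfin.subset (by
    intro ℓ hℓ
    rw [Function.mem_support]
    intro h
    apply Function.mem_support.1 hℓ
    have hz : P ℓ v = 0 := by rw [h]; rfl
    show y ^ ℓ * ‖P ℓ v‖ ^ 2 = 0
    rw [hz]; simp)
  have hterm : ∀ ℓ : ℤ, g ℓ ≤ L := fun ℓ =>
    le_trans (single_le_finsum ℓ hgfin hgnn) hT
  -- self-duality relates norms at ℓ and -ℓ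
  have hnorm : ∀ ℓ : ℤ, y ^ ℓ * ‖P ℓ v‖ = ‖P (-ℓ) v‖ := by
    intro ℓ
    have := congrArg norm (hSD ℓ)
    rwa [norm_smul, Real.norm_eq_abs, abs_of_pos (zpow_pos hy0 ℓ), hCiso] at this
  -- bound each component
  have hcomp : ∀ ℓ : ℤ, ‖P ℓ v‖ ^ 2 ≤ B := by
    intro ℓ
    rcases le_or_gt 0 ℓ with hℓ | hℓ
    · have h1 : (1 : ℝ) ≤ y ^ ℓ := one_le_zpow₀ hy1 hℓ
      have hgl : y ^ ℓ * ‖P ℓ v‖ ^ 2 ≤ L := hterm ℓ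
      nlinarith [mul_nonneg (sub_nonneg.2 h1) (sq_nonneg ‖P ℓ v‖)]
    · -- ℓ < 0 : use self-duality to transfer to -ℓ > 0
      rcases hgap v hvΛ (-ℓ) with h0 | hlamle
      · have : y ^ ℓ * ‖P ℓ v‖ = 0 := by rw [hnorm ℓ, h0, norm_zero]
        have hPl : ‖P ℓ v‖ = 0 := by
          rcases mul_eq_zero.1 this with h | h
          · exact absurd h (ne_of_gt (zpow_pos hy0 ℓ))
          · exact h
        rw [hPl]
        simpa using hB0
      · -- ‖P ℓ v‖ = y^{-ℓ} ‖P (-ℓ) v‖ and y^{-ℓ} ≤ L / lam^2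
        have hne : y ^ (-ℓ) * ‖P (-ℓ) v‖ ^ 2 ≤ L := hterm (-ℓ)
        have hyml : 0 < y ^ (-ℓ) := zpow_pos hy0 _
        have hylam : y ^ (-ℓ) * (lam * lam) ≤ L := by
          calc y ^ (-ℓ) * (lam * lam) ≤ y ^ (-ℓ) * ‖P (-ℓ) v‖ ^ 2 := by
                have : lam * lam ≤ ‖P (-ℓ) v‖ ^ 2 := by nlinarith
                exact mul_le_mul_of_nonneg_left this hyml.le
            _ ≤ L := hne
        have hmul : y ^ (-ℓ) * y ^ ℓ = 1 := by
          rw [← zpow_add₀ (ne_of_gt hy0)]; simp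
        have hnormeq : ‖P ℓ v‖ = y ^ (-ℓ) * ‖P (-ℓ) v‖ := by
          calc ‖P ℓ v‖ = (y ^ (-ℓ) * y ^ ℓ) * ‖P ℓ v‖ := by rw [hmul, one_mul]
            _ = y ^ (-ℓ) * (y ^ ℓ * ‖P ℓ v‖) := by ring
            _ = y ^ (-ℓ) * ‖P (-ℓ) v‖ := by rw [hnorm ℓ]
        have hnn2 : y ^ (-ℓ) * ‖P (-ℓ) v‖ ^ 2 ≤ L := hne
        have : ‖P ℓ v‖ ^ 2 = y ^ (-ℓ) * (y ^ (-ℓ) * ‖P (-ℓ) v‖ ^ 2) := by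
          rw [hnormeq]; ring
        rw [this]
        have hyL : y ^ (-ℓ) ≤ L / (lam * lam) := by
          rw [le_div_iff₀ (by positivity)]
          exact hylam
        have hLnn : 0 ≤ L := le_trans (by positivity) hylam
        calc y ^ (-ℓ) * (y ^ (-ℓ) * ‖P (-ℓ) v‖ ^ 2)
            ≤ (L / (lam * lam)) * L := by
              apply mul_le_mul hyL hnn2 (by positivity) (by positivity)
          _ = L * L / (lam * lam) := by ring
          _ ≤ B := hLLB
  -- bound the full norm
  refine ⟨hvΛ, ?_⟩
  have hsub : Function.support (fun ℓ : ℤ => P ℓ v) ⊆ ↑hPfin.toFinset := by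
    intro ℓ hℓ
    rw [Finset.mem_coe, Set.Finite.mem_toFinset, Function.mem_support]
    intro h
    exact Function.mem_support.1 hℓ (by rw [h]; rfl)
  have hvsum : v = ∑ ℓ ∈ hPfin.toFinset, P ℓ v := by
    conv_lhs => rw [← hPsum v]
    exact finsum_eq_sum_of_support_subset _ hsub
  have hnv : ‖v‖ ≤ (hPfin.toFinset.card : ℝ) * Real.sqrt B := by
    calc ‖v‖ = ‖∑ ℓ ∈ hPfin.toFinset, P ℓ v‖ := by rw [← hvsum]
      _ ≤ ∑ ℓ ∈ hPfin.toFinset, ‖P ℓ v‖ := norm_sum_le _ _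
      _ ≤ ∑ _ℓ ∈ hPfin.toFinset, Real.sqrt B := by
          apply Finset.sum_le_sum
          intro ℓ _
          have := hcomp ℓ
          nlinarith [Real.sq_sqrt hB0, Real.sqrt_nonneg B, norm_nonneg (P ℓ v),
            abs_le_abs (hcomp ℓ)]
      _ = (hPfin.toFinset.card : ℝ) * Real.sqrt B := by
          rw [Finset.sum_const, nsmul_eq_mul]
  linarith
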